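/- In the quadratic-loss SGD model with ‖x‖² ≤ M almost surely and V = E[xxᵀ] ⪰ μI for some μ > 0, if 0 < γ < 2/M and γμ(2 − γM) ≤ 1, then for every n ≥ 0, E[‖θ_n − θ*‖²] ≤ (1 − γ(2 − γM)μ)ⁿ E[‖θ_0 − θ*‖²] + γσ²E[‖x‖²] / ((2 − γM)μ); i.e., constant-rate SGD forgets its initial conditions exponentially fast and stabilizes at a mean squared error of order γ. -/

import Mathlib

open MeasureTheory ProbabilityTheory Matrix

lemma meas_dot {α : Type*} {mα : MeasurableSpace α} {p : ℕ} {u v : α → Fin p → ℝ}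
    (hu : Measurable u) (hv : Measurable v) : Measurable fun ω => u ω ⬝ᵥ v ω := by
  simp only [dotProduct]
  exact Finset.measurable_sum _ fun i _ =>
    ((measurable_pi_apply i).comp hu).mul ((measurable_pi_apply i).comp hv)

lemma dot_self_nonneg {p : ℕ} (v : Fin p → ℝ) : 0 ≤ v ⬝ᵥ v :=
  Finset.sum_nonneg fun i _ => mul_self_nonneg _

lemma dot_sq_le {p : ℕ} (a d : Fin p → ℝ) : (a ⬝ᵥ d) ^ 2 ≤ (a ⬝ᵥ a) * (d ⬝ᵥ d) := by
  simpa [dotProduct, sq] using Finset.sum_mul_sq_le_sq_mul_sq Finset.univ a d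

lemma integrable_of_bound {α : Type*} [MeasurableSpace α] (μ : Measure α) [IsFiniteMeasure μ]
    {f : α → ℝ} (hm : AEStronglyMeasurable f μ) (C : ℝ) (h : ∀ᵐ a ∂μ, |f a| ≤ C) :
    Integrable f μ :=
  Integrable.mono' (integrable_const C) hm (by simpa [Real.norm_eq_abs] using h)

lemma sgd_expand {p : ℕ} (γ : ℝ) (d a : Fin p → ℝ) (e : ℝ) :
    (d + γ • ((e - a ⬝ᵥ d) • a)) ⬝ᵥ (d + γ • ((e - a ⬝ᵥ d) • a))
      = d ⬝ᵥ d - 2*γ*(a ⬝ᵥ d)^2 + γ^2*(a ⬝ᵥ d)^2*(a ⬝ᵥ a)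
        + e * (2*γ*(a ⬝ᵥ d) - 2*γ^2*(a ⬝ᵥ d)*(a ⬝ᵥ a)) + e^2 * (γ^2*(a ⬝ᵥ a)) := by
  have h := dotProduct_comm d a
  simp only [dotProduct_add, add_dotProduct, smul_dotProduct, dotProduct_smul, smul_eq_mul, h]
  ring

lemma abs_entry_mul_le {p : ℕ} {M : ℝ} {a : Fin p → ℝ} (h : a ⬝ᵥ a ≤ M) (i j : Fin p) :
    |a i * a j| ≤ M := by
  have hi : a i * a i ≤ a ⬝ᵥ a :=
    Finset.single_le_sum (f := fun k => a k * a k) (fun k _ => mul_self_nonneg _)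
      (Finset.mem_univ i)
  have hj : a j * a j ≤ a ⬝ᵥ a :=
    Finset.single_le_sum (f := fun k => a k * a k) (fun k _ => mul_self_nonneg _)
      (Finset.mem_univ j)
  rw [abs_le]
  constructor <;> nlinarith [sq_nonneg (a i - a j), sq_nonneg (a i + a j)]

lemma Q_eq {p : ℕ} (νx : Measure (Fin p → ℝ)) [IsProbabilityMeasure νx] (M : ℝ)
    (hbdd : ∀ᵐ a ∂νx, a ⬝ᵥ a ≤ M) (V : Matrix (Fin p) (Fin p) ℝ)
    (hV : ∀ i j, V i j = ∫ a, a i * a j ∂νx) (d : Fin p → ℝ) :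
    ∫ a, (a ⬝ᵥ d) ^ 2 ∂νx = d ⬝ᵥ (V *ᵥ d) := by
  have hij_int : ∀ i j : Fin p, Integrable (fun a : Fin p → ℝ => (d i * d j) * (a i * a j)) νx := by
    intro i j
    refine (integrable_of_bound νx ?_ M ?_).const_mul _
    · exact ((measurable_pi_apply i).mul (measurable_pi_apply j)).aestronglyMeasurable
    · filter_upwards [hbdd] with a ha using abs_entry_mul_le ha i j
  have hexp : ∀ a : Fin p → ℝ, (a ⬝ᵥ d) ^ 2 = ∑ i, ∑ j, (d i * d j) * (a i * a j) := by
    intro a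
    simp only [dotProduct, sq, Finset.sum_mul_sum]
    exact Finset.sum_congr rfl fun i _ => Finset.sum_congr rfl fun j _ => by ring
  calc ∫ a, (a ⬝ᵥ d) ^ 2 ∂νx
      = ∫ a, ∑ i, ∑ j, (d i * d j) * (a i * a j) ∂νx := by
        exact integral_congr_ae (Filter.Eventually.of_forall fun a => hexp a)
    _ = ∑ i, ∑ j, ∫ a, (d i * d j) * (a i * a j) ∂νx := by
        rw [integral_finset_sum _ fun i _ => integrable_finset_sum _ fun j _ => hij_int i j]
        exact Finset.sum_congr rfl fun i _ => integral_finset_sum _ fun j _ => hij_int i j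
    _ = ∑ i, ∑ j, d i * d j * V i j := by
        refine Finset.sum_congr rfl fun i _ => Finset.sum_congr rfl fun j _ => ?_
        rw [MeasureTheory.integral_const_mul, hV]
    _ = d ⬝ᵥ (V *ᵥ d) := by
        simp only [dotProduct, mulVec, Finset.mul_sum]
        exact Finset.sum_congr rfl fun i _ => Finset.sum_congr rfl fun j _ => by ring

lemma g_ub {γ M D s t e : ℝ} (hγ : 0 ≤ γ) (hD : 0 ≤ D) (ht0 : 0 ≤ t) (htM : t ≤ M)
    (hs2 : s ^ 2 ≤ t * D) :
    D - 2*γ*s^2 + γ^2*s^2*t + e*(2*γ*s - 2*γ^2*s*t) + e^2*(γ^2*t)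
      ≤ (1 + (3*γ + 2*γ^2*M)*M) * D + (2*(γ + γ^2*M)) * e^2 := by
  have hq : 2*((e - s)*s) ≤ (e - s)^2 + s^2 := by nlinarith [sq_nonneg (e - 2*s)]
  have hq2 : (e - s)^2 ≤ 2*e^2 + 2*s^2 := by nlinarith [sq_nonneg (e + s)]
  have hM0 : 0 ≤ M := le_trans ht0 htM
  have hsMD : s^2 ≤ M * D := le_trans hs2 (by nlinarith)
  have hco : 0 ≤ γ + γ^2*M := by positivity
  have hco2 : (0:ℝ) ≤ 3*γ + 2*γ^2*M := by positivity
  have f1 : γ*(2*((e-s)*s)) ≤ γ*((e-s)^2 + s^2) := mul_le_mul_of_nonneg_left hq hγ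
  have f2 : γ^2*((e-s)^2*t) ≤ γ^2*M*(e-s)^2 := by
    have h := mul_le_mul_of_nonneg_left htM (mul_nonneg (sq_nonneg γ) (sq_nonneg (e-s)))
    nlinarith
  have f3 : (γ+γ^2*M)*(e-s)^2 ≤ (γ+γ^2*M)*(2*e^2+2*s^2) := mul_le_mul_of_nonneg_left hq2 hco
  have f4 : (3*γ+2*γ^2*M)*s^2 ≤ (3*γ+2*γ^2*M)*(M*D) := mul_le_mul_of_nonneg_left hsMD hco2
  have key : D - 2*γ*s^2 + γ^2*s^2*t + e*(2*γ*s - 2*γ^2*s*t) + e^2*(γ^2*t)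
      = D + γ*(2*((e-s)*s)) + γ^2*((e-s)^2*t) := by ring
  rw [key]
  linarith

lemma integral_add3 {α : Type*} [MeasurableSpace α] {μ : Measure α} {f g h : α → ℝ}
    (hf : Integrable f μ) (hg : Integrable g μ) (hh : Integrable h μ) :
    ∫ a, (f a + g a + h a) ∂μ = (∫ a, f a ∂μ) + (∫ a, g a ∂μ) + (∫ a, h a ∂μ) := by
  have h1 := integral_add (hf.add hg) hh
  simp only [Pi.add_apply] at h1
  rw [integral_add hf hg] at h1
  exact h1

section Indep
variable {Ω : Type*} [MeasurableSpace Ω] {κ β : Type*} [MeasurableSpace κ] [MeasurableSpace β]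

lemma iIndep_option_aux (P : Measure Ω) [IsProbabilityMeasure P]
    (Z : Ω → κ) (f : ℕ → Ω → β) (hZ : Measurable Z) (hf : ∀ n, Measurable (f n))
    (hindep : IndepFun Z (fun ω n => f n ω) P)
    (hiid : iIndepFun f P) :
    iIndep (fun i : Option ℕ => Option.elim i (MeasurableSpace.comap Z inferInstance)
      (fun k => MeasurableSpace.comap (f k) inferInstance)) P := by
  classical
  rw [iIndep_iff]
  intro S g hg
  -- the stream as one random variable
  set F : Ω → ℕ → β := fun ω n => f n ω with hF
  have hFmeas : Measurable F := measurable_pi_lambda _ hf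
  have hZF : Indep (MeasurableSpace.comap Z inferInstance)
      (MeasurableSpace.comap F inferInstance) P := (IndepFun_iff_Indep _ _ _).mp hindep
  -- the some-part
  have hstream : ∀ (T : Finset ℕ) (h : ∀ k ∈ T, MeasurableSet[MeasurableSpace.comap (f k) inferInstance] (g (some k))),
      P (⋂ k ∈ T, g (some k)) = ∏ k ∈ T, P (g (some k)) := by
    intro T hT
    exact hiid.iIndep.meas_biInter hT
  -- the some-part is F-measurable
  have hsome_meas : ∀ (T : Finset ℕ),
      (∀ k ∈ T, MeasurableSet[MeasurableSpace.comap (f k) inferInstance] (g (some k))) →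
      MeasurableSet[MeasurableSpace.comap F inferInstance] (⋂ k ∈ T, g (some k)) := by
    intro T hT
    refine MeasurableSet.biInter T.countable_toSet (fun k hk => ?_)
    obtain ⟨B, hB, hBe⟩ := hT k hk
    exact ⟨(fun v : ℕ → β => v k) ⁻¹' B, (measurable_pi_apply k) hB, by
      rw [← hBe]; rfl⟩
  by_cases hn : none ∈ S
  · -- split off none
    have hS : S = insert none (S.erase none) := (Finset.insert_erase hn).symm
    have hnone : MeasurableSet[MeasurableSpace.comap Z inferInstance] (g none) := hg none hn
    set T : Finset ℕ := S.eraseNone with hTdef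
    have hTS : ∀ k ∈ T, some k ∈ S := fun k hk => Finset.mem_eraseNone.mp hk
    have hiT : (⋂ i ∈ S.erase none, g i) = ⋂ k ∈ T, g (some k) := by
      ext ω
      simp only [Set.mem_iInter]
      constructor
      · intro h k hk
        exact h (some k) (Finset.mem_erase.mpr ⟨by simp, hTS k hk⟩)
      · intro h i hi
        rcases i with _ | k
        · exact absurd rfl (Finset.mem_erase.mp hi).1
        · exact h k (Finset.mem_eraseNone.mpr (Finset.mem_erase.mp hi).2)
    have hTmeas : ∀ k ∈ T, MeasurableSet[MeasurableSpace.comap (f k) inferInstance] (g (some k)) :=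
      fun k hk => hg (some k) (hTS k hk)
    have key : P (g none ∩ ⋂ k ∈ T, g (some k)) = P (g none) * P (⋂ k ∈ T, g (some k)) := by
      rw [Indep_iff] at hZF
      exact hZF _ _ hnone (hsome_meas T hTmeas)
    rw [hS, Finset.set_biInter_insert, Finset.prod_insert (Finset.notMem_erase _ _), hiT, key,
      hstream T hTmeas]
    congr 1
    refine Finset.prod_nbij some (fun k hk => Finset.mem_erase.mpr ⟨by simp, hTS k hk⟩)
      (fun a _ b _ h => Option.some_injective _ h) ?_ (fun k _ => rfl)
    intro i hi
    rcases Finset.mem_coe.mp hi with hi'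
    rcases i with _ | k
    · exact absurd rfl (Finset.mem_erase.mp hi').1
    · exact ⟨k, Finset.mem_coe.mpr (Finset.mem_eraseNone.mpr (Finset.mem_erase.mp hi').2), rfl⟩
  · -- no none
    set T : Finset ℕ := S.eraseNone with hTdef
    have hTS : ∀ k ∈ T, some k ∈ S := fun k hk => Finset.mem_eraseNone.mp hk
    have hiT : (⋂ i ∈ S, g i) = ⋂ k ∈ T, g (some k) := by
      ext ω
      simp only [Set.mem_iInter]
      constructor
      · intro h k hk
        exact h (some k) (hTS k hk)
      · intro h i hi
        rcases i with _ | k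
        · exact absurd hi hn
        · exact h k (Finset.mem_eraseNone.mpr hi)
    have hTmeas : ∀ k ∈ T, MeasurableSet[MeasurableSpace.comap (f k) inferInstance] (g (some k)) :=
      fun k hk => hg (some k) (hTS k hk)
    rw [hiT, hstream T hTmeas]
    refine Finset.prod_nbij some hTS
      (fun a _ b _ h => Option.some_injective _ h) ?_ (fun k _ => rfl)
    intro i hi
    rcases Finset.mem_coe.mp hi with hi'
    rcases i with _ | k
    · exact absurd hi' hn
    · exact ⟨k, Finset.mem_coe.mpr (Finset.mem_eraseNone.mpr hi'), rfl⟩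

lemma indep_past_now (P : Measure Ω) [IsProbabilityMeasure P]
    (Z : Ω → κ) (f : ℕ → Ω → β) (hZ : Measurable Z) (hf : ∀ n, Measurable (f n))
    (hindep : IndepFun Z (fun ω n => f n ω) P)
    (hiid : iIndepFun f P) (n : ℕ) :
    Indep (MeasurableSpace.comap Z inferInstance
        ⊔ ⨆ k ∈ Finset.range n, MeasurableSpace.comap (f k) inferInstance)
      (MeasurableSpace.comap (f n) inferInstance) P := by
  classical
  have hii := iIndep_option_aux P Z f hZ hf hindep hiid
  set m : Option ℕ → MeasurableSpace Ω := fun i =>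
    Option.elim i (MeasurableSpace.comap Z inferInstance)
      (fun k => MeasurableSpace.comap (f k) inferInstance) with hm
  have h_le : ∀ i, m i ≤ ‹MeasurableSpace Ω› := by
    rintro (_ | k)
    · exact hZ.comap_le
    · exact (hf k).comap_le
  have hST : Disjoint (insert none (some '' (Finset.range n : Set ℕ)) : Set (Option ℕ))
      ({some n} : Set (Option ℕ)) := by
    simp only [Set.disjoint_singleton_right, Set.mem_insert_iff, Set.mem_image]
    rintro (h | ⟨k, hk, hkn⟩)
    · cases h
    · rw [Option.some_inj] at hkn
      subst hkn
      simp at hk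
  have h := indep_iSup_of_disjoint h_le hii hST
  have h2 : (⨆ i ∈ ({some n} : Set (Option ℕ)), m i) = m (some n) := by simp
  rw [h2] at h
  refine indep_of_indep_of_le_left h ?_
  refine sup_le ?_ ?_
  · exact le_trans (le_of_eq rfl : MeasurableSpace.comap Z inferInstance ≤ m none)
      (le_biSup m (Set.mem_insert _ _))
  · refine iSup_le fun k => iSup_le fun hk => ?_
    exact le_trans (le_refl (m (some k)))
      (le_biSup m (Set.mem_insert_of_mem _ ⟨k, by simpa using hk, rfl⟩))

lemma geom_rec_bound {ρ c : ℝ} (hρ0 : 0 ≤ ρ) (hρ1 : ρ < 1) (hc : 0 ≤ c) (a : ℕ → ℝ)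
    (hrec : ∀ n : ℕ, a (n + 1) ≤ ρ * a n + c) :
    ∀ n, a n ≤ ρ ^ n * a 0 + c / (1 - ρ) := by
  have h1ρ : 0 < 1 - ρ := by linarith
  intro n
  induction n with
  | zero => simp [le_div_iff₀ h1ρ]; nlinarith
  | succ n ih =>
    calc a (n + 1) ≤ ρ * a n + c := hrec n
      _ ≤ ρ * (ρ ^ n * a 0 + c / (1 - ρ)) + c := by nlinarith
      _ = ρ ^ (n + 1) * a 0 + (ρ * (c / (1 - ρ)) + c) := by ring
      _ = ρ ^ (n + 1) * a 0 + c / (1 - ρ) := by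
          field_simp
          ring

end Indep

set_option maxHeartbeats 2000000 in
lemma sgd_step {p : ℕ} (νx : Measure (Fin p → ℝ)) (νε : Measure ℝ)
    [IsProbabilityMeasure νx] [IsProbabilityMeasure νε]
    (γ σ2 M μ : ℝ) (hμ : 0 < μ) (hM : 0 < M) (hγ : 0 < γ) (hγM2 : γ * M < 2)
    (hmean : ∫ e, e ∂νε = 0) (hvar : ∫ e, e ^ 2 ∂νε = σ2)
    (hεint : Integrable (fun e : ℝ => e ^ 2) νε)
    (hbdd : ∀ᵐ a ∂νx, a ⬝ᵥ a ≤ M)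
    (V : Matrix (Fin p) (Fin p) ℝ) (hV : ∀ i j, V i j = ∫ a, a i * a j ∂νx)
    (hVμ : ∀ v : Fin p → ℝ, μ * (v ⬝ᵥ v) ≤ v ⬝ᵥ (V *ᵥ v))
    {Ω : Type*} [MeasurableSpace Ω] (P : Measure Ω) [IsProbabilityMeasure P]
    (δ : Ω → Fin p → ℝ) (w : Ω → (Fin p → ℝ) × ℝ)
    (hδm : Measurable δ) (hwm : Measurable w)
    (hlaw : P.map (fun ω => (δ ω, w ω)) = (P.map δ).prod (νx.prod νε))
    (hδint : Integrable (fun ω => δ ω ⬝ᵥ δ ω) P)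
    (δ' : Ω → Fin p → ℝ)
    (hδ' : ∀ ω, δ' ω = δ ω + γ • (((w ω).2 - (w ω).1 ⬝ᵥ δ ω) • (w ω).1)) :
    Integrable (fun ω => δ' ω ⬝ᵥ δ' ω) P ∧
      ∫ ω, δ' ω ⬝ᵥ δ' ω ∂P
        ≤ (1 - γ * (2 - γ * M) * μ) * (∫ ω, δ ω ⬝ᵥ δ ω ∂P)
          + γ ^ 2 * σ2 * (∫ a, a ⬝ᵥ a ∂νx) := by
  have hM0 : (0:ℝ) ≤ M := hM.le
  have hσ2 : 0 ≤ σ2 := hvar ▸ integral_nonneg fun e => sq_nonneg e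
  have hEx0 : 0 ≤ ∫ a, a ⬝ᵥ a ∂νx := integral_nonneg fun a => dot_self_nonneg a
  set L : Measure (Fin p → ℝ) := P.map δ with hL
  haveI : IsProbabilityMeasure L := Measure.isProbabilityMeasure_map hδm.aemeasurable
  obtain ⟨g, hgdef⟩ : ∃ g' : (Fin p → ℝ) × ((Fin p → ℝ) × ℝ) → ℝ, g' = fun z =>
    z.1 ⬝ᵥ z.1 - 2*γ*(z.2.1 ⬝ᵥ z.1)^2 + γ^2*(z.2.1 ⬝ᵥ z.1)^2*(z.2.1 ⬝ᵥ z.2.1)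
      + z.2.2*(2*γ*(z.2.1 ⬝ᵥ z.1) - 2*γ^2*(z.2.1 ⬝ᵥ z.1)*(z.2.1 ⬝ᵥ z.2.1))
      + z.2.2^2*(γ^2*(z.2.1 ⬝ᵥ z.2.1)) := ⟨_, rfl⟩
  have hpt : ∀ ω, δ' ω ⬝ᵥ δ' ω = g (δ ω, w ω) := by
    intro ω; rw [hδ' ω, sgd_expand, hgdef]
  have hg0 : ∀ z, 0 ≤ g z := by
    intro z
    have := sgd_expand γ z.1 z.2.1 z.2.2
    rw [hgdef]
    dsimp only
    rw [← this]
    exact dot_self_nonneg _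
  have hmd : Measurable fun z : (Fin p → ℝ) × ((Fin p → ℝ) × ℝ) => z.1 := measurable_fst
  have hma : Measurable fun z : (Fin p → ℝ) × ((Fin p → ℝ) × ℝ) => z.2.1 :=
    measurable_fst.comp measurable_snd
  have hme : Measurable fun z : (Fin p → ℝ) × ((Fin p → ℝ) × ℝ) => z.2.2 :=
    measurable_snd.comp measurable_snd
  have hsm : Measurable fun z : (Fin p → ℝ) × ((Fin p → ℝ) × ℝ) => z.2.1 ⬝ᵥ z.1 :=
    meas_dot hma hmd
  have htm : Measurable fun z : (Fin p → ℝ) × ((Fin p → ℝ) × ℝ) => z.2.1 ⬝ᵥ z.2.1 :=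
    meas_dot hma hma
  have hDm : Measurable fun z : (Fin p → ℝ) × ((Fin p → ℝ) × ℝ) => z.1 ⬝ᵥ z.1 :=
    meas_dot hmd hmd
  have hgmeas : Measurable g := by
    rw [hgdef]
    refine Measurable.add (Measurable.add (Measurable.add (Measurable.sub hDm ?_) ?_) ?_) ?_
    · exact (hsm.pow_const 2).const_mul (2*γ)
    · exact ((hsm.pow_const 2).const_mul (γ^2)).mul htm
    · exact hme.mul (((hsm.const_mul (2*γ))).sub ((hsm.const_mul (2*γ^2)).mul htm))
    · exact (hme.pow_const 2).mul (htm.const_mul (γ^2))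
  have hprod_bdd : ∀ᵐ z ∂(L.prod (νx.prod νε)), z.2.1 ⬝ᵥ z.2.1 ≤ M :=
    Measure.quasiMeasurePreserving_snd.ae (Measure.quasiMeasurePreserving_fst.ae hbdd)
  have hL1 : Integrable (fun d : Fin p → ℝ => d ⬝ᵥ d) L :=
    (integrable_map_measure (meas_dot measurable_id measurable_id).aestronglyMeasurable
      hδm.aemeasurable).mpr hδint
  have hIntD : Integrable (fun z : (Fin p → ℝ) × ((Fin p → ℝ) × ℝ) => z.1 ⬝ᵥ z.1) (L.prod (νx.prod νε)) := by
    simpa using hL1.mul_prod (integrable_const (1:ℝ))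
  have hIntE2ν : Integrable (fun y : (Fin p → ℝ) × ℝ => y.2^2) (νx.prod νε) := by
    simpa using (integrable_const (1:ℝ)).mul_prod hεint
  have hIntE2 : Integrable (fun z : (Fin p → ℝ) × ((Fin p → ℝ) × ℝ) => z.2.2^2) (L.prod (νx.prod νε)) := by
    simpa using (integrable_const (1:ℝ)).mul_prod hIntE2ν
  have hgle : ∀ᵐ z ∂(L.prod (νx.prod νε)), ‖g z‖ ≤ (1 + (3*γ + 2*γ^2*M)*M) * (z.1 ⬝ᵥ z.1)
      + (2*(γ + γ^2*M)) * z.2.2^2 := by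
    filter_upwards [hprod_bdd] with z hz
    rw [Real.norm_eq_abs, abs_of_nonneg (hg0 z)]
    rw [hgdef]
    exact g_ub hγ.le (dot_self_nonneg _) (dot_self_nonneg _) hz (dot_sq_le _ _)
  have hgInt : Integrable g (L.prod (νx.prod νε)) :=
    Integrable.mono' ((hIntD.const_mul _).add (hIntE2.const_mul _))
      hgmeas.aestronglyMeasurable hgle
  have hpair : Measurable fun ω => (δ ω, w ω) := hδm.prodMk hwm
  have hEq1 : ∫ ω, δ' ω ⬝ᵥ δ' ω ∂P = ∫ z, g z ∂(L.prod (νx.prod νε)) := by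
    have e1 : ∫ ω, δ' ω ⬝ᵥ δ' ω ∂P = ∫ ω, g (δ ω, w ω) ∂P :=
      integral_congr_ae (Filter.Eventually.of_forall fun ω => hpt ω)
    rw [e1, ← integral_map hpair.aemeasurable hgmeas.aestronglyMeasurable, hlaw]
  have hFub : ∫ z, g z ∂(L.prod (νx.prod νε)) = ∫ d, ∫ y, g (d, y) ∂(νx.prod νε) ∂L := integral_prod g hgInt
  -- inner integral bound
  have hinner : ∀ d : Fin p → ℝ, ∫ y, g (d, y) ∂(νx.prod νε)
      ≤ (1 - γ * (2 - γ * M) * μ) * (d ⬝ᵥ d) + γ^2 * σ2 * (∫ a, a ⬝ᵥ a ∂νx) := by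
    intro d
    have hD0 : 0 ≤ d ⬝ᵥ d := dot_self_nonneg d
    have hsma : Measurable fun a : Fin p → ℝ => a ⬝ᵥ d := meas_dot measurable_id measurable_const
    have htma : Measurable fun a : Fin p → ℝ => a ⬝ᵥ a := meas_dot measurable_id measurable_id
    have hs2MD : ∀ᵐ a ∂νx, (a ⬝ᵥ d)^2 ≤ M * (d ⬝ᵥ d) := by
      filter_upwards [hbdd] with a ha
      calc (a ⬝ᵥ d)^2 ≤ (a ⬝ᵥ a) * (d ⬝ᵥ d) := dot_sq_le a d
        _ ≤ M * (d ⬝ᵥ d) := mul_le_mul_of_nonneg_right ha hD0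
    have hIntT : Integrable (fun a : Fin p → ℝ => a ⬝ᵥ a) νx := by
      refine integrable_of_bound νx htma.aestronglyMeasurable M ?_
      filter_upwards [hbdd] with a ha
      rwa [abs_of_nonneg (dot_self_nonneg a)]
    have hIntS2 : Integrable (fun a : Fin p → ℝ => (a ⬝ᵥ d)^2) νx := by
      refine integrable_of_bound νx (hsma.pow_const 2).aestronglyMeasurable (M*(d ⬝ᵥ d)) ?_
      filter_upwards [hs2MD] with a ha
      rwa [abs_of_nonneg (sq_nonneg _)]
    have hIntS2T : Integrable (fun a : Fin p → ℝ => (a ⬝ᵥ d)^2 * (a ⬝ᵥ a)) νx := by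
      refine integrable_of_bound νx ((hsma.pow_const 2).mul htma).aestronglyMeasurable
        (M*(d ⬝ᵥ d)*M) ?_
      filter_upwards [hbdd, hs2MD] with a ha ha2
      rw [abs_of_nonneg (mul_nonneg (sq_nonneg _) (dot_self_nonneg a))]
      have := dot_self_nonneg a
      nlinarith [sq_nonneg (a ⬝ᵥ d)]
    have hIntS : Integrable (fun a : Fin p → ℝ => a ⬝ᵥ d) νx := by
      refine integrable_of_bound νx hsma.aestronglyMeasurable ((1 + M*(d ⬝ᵥ d))/2) ?_
      filter_upwards [hs2MD] with a ha
      nlinarith [sq_nonneg (|a ⬝ᵥ d| - 1), sq_abs (a ⬝ᵥ d), abs_nonneg (a ⬝ᵥ d)]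
    have hIntST : Integrable (fun a : Fin p → ℝ => (a ⬝ᵥ d) * (a ⬝ᵥ a)) νx := by
      refine integrable_of_bound νx (hsma.mul htma).aestronglyMeasurable
        (((1 + M*(d ⬝ᵥ d))/2) * M) ?_
      filter_upwards [hbdd, hs2MD] with a ha ha2
      rw [abs_mul, abs_of_nonneg (dot_self_nonneg a)]
      have h1 : |a ⬝ᵥ d| ≤ (1 + M*(d ⬝ᵥ d))/2 := by
        nlinarith [sq_nonneg (|a ⬝ᵥ d| - 1), sq_abs (a ⬝ᵥ d), abs_nonneg (a ⬝ᵥ d)]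
      exact mul_le_mul h1 ha (dot_self_nonneg a) (by positivity)
    have hIntE1 : Integrable (fun e : ℝ => e) νε := by
      refine Integrable.mono' (((integrable_const (1:ℝ)).add hεint).const_mul (1/2))
        measurable_id.aestronglyMeasurable ?_
      refine Filter.Eventually.of_forall fun e => ?_
      rw [Real.norm_eq_abs]
      simp only [Pi.add_apply]
      nlinarith [sq_nonneg (|e| - 1), sq_abs e, abs_nonneg e]
    -- decompose
    obtain ⟨fA, hfA⟩ : ∃ f : (Fin p → ℝ) → ℝ, f = fun a =>
      (d ⬝ᵥ d) + (-(2*γ)) * (a ⬝ᵥ d)^2 + γ^2 * ((a ⬝ᵥ d)^2 * (a ⬝ᵥ a)) := ⟨_, rfl⟩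
    obtain ⟨fB, hfB⟩ : ∃ f : (Fin p → ℝ) → ℝ, f = fun a =>
      (2*γ) * (a ⬝ᵥ d) + (-(2*γ^2)) * ((a ⬝ᵥ d) * (a ⬝ᵥ a)) := ⟨_, rfl⟩
    obtain ⟨fC, hfC⟩ : ∃ f : (Fin p → ℝ) → ℝ, f = fun a => γ^2 * (a ⬝ᵥ a) := ⟨_, rfl⟩
    have hIntfA : Integrable fA νx := by
      rw [hfA]
      exact ((integrable_const _).add (hIntS2.const_mul _)).add (hIntS2T.const_mul _)
    have hIntfB : Integrable fB νx := by
      rw [hfB]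
      exact (hIntS.const_mul _).add (hIntST.const_mul _)
    have hIntfC : Integrable fC νx := by
      rw [hfC]; exact hIntT.const_mul _
    have hdecomp : ∀ y : (Fin p → ℝ) × ℝ, g (d, y) = fA y.1 * 1 + fB y.1 * y.2 + fC y.1 * y.2^2 := by
      intro y
      rw [hgdef, hfA, hfB, hfC]
      dsimp only
      ring
    have hsplit : ∫ y, g (d, y) ∂(νx.prod νε)
        = (∫ a, fA a ∂νx) * (∫ _e, (1:ℝ) ∂νε) + (∫ a, fB a ∂νx) * (∫ e, e ∂νε)
          + (∫ a, fC a ∂νx) * (∫ e, e^2 ∂νε) := by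
      have e0 : ∫ y, g (d, y) ∂(νx.prod νε)
          = ∫ y : (Fin p → ℝ) × ℝ, (fA y.1 * 1 + fB y.1 * y.2 + fC y.1 * y.2^2) ∂(νx.prod νε) :=
        integral_congr_ae (Filter.Eventually.of_forall fun y => hdecomp y)
      have e1 : ∫ y : (Fin p → ℝ) × ℝ, (fA y.1 * 1 + fB y.1 * y.2 + fC y.1 * y.2^2) ∂(νx.prod νε)
          = (∫ y : (Fin p → ℝ) × ℝ, fA y.1 * 1 ∂(νx.prod νε))
            + (∫ y : (Fin p → ℝ) × ℝ, fB y.1 * y.2 ∂(νx.prod νε))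
            + (∫ y : (Fin p → ℝ) × ℝ, fC y.1 * y.2^2 ∂(νx.prod νε)) :=
        integral_add3 (hIntfA.mul_prod (integrable_const 1)) (hIntfB.mul_prod hIntE1)
          (hIntfC.mul_prod hεint)
      have e2 : ∫ y : (Fin p → ℝ) × ℝ, fA y.1 * 1 ∂(νx.prod νε)
          = (∫ a, fA a ∂νx) * (∫ _e, (1:ℝ) ∂νε) := integral_prod_mul fA (fun _ => (1:ℝ))
      have e3 : ∫ y : (Fin p → ℝ) × ℝ, fB y.1 * y.2 ∂(νx.prod νε)
          = (∫ a, fB a ∂νx) * (∫ e, e ∂νε) := integral_prod_mul fB (fun e => e)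
      have e4 : ∫ y : (Fin p → ℝ) × ℝ, fC y.1 * y.2^2 ∂(νx.prod νε)
          = (∫ a, fC a ∂νx) * (∫ e, e^2 ∂νε) := integral_prod_mul fC (fun e => e^2)
      rw [e0, e1, e2, e3, e4]
    rw [hsplit, hmean, hvar]
    simp only [integral_const, measure_univ, ENNReal.toReal_one, probReal_univ, smul_eq_mul, one_mul, mul_one,
      mul_zero, add_zero]
    -- now: ∫ fA + (∫ fC) * σ2 ≤ ρ * D + γ^2 σ2 Ex
    have hfAval : ∫ a, fA a ∂νx
        = (d ⬝ᵥ d) + (-(2*γ)) * (∫ a, (a ⬝ᵥ d)^2 ∂νx)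
          + γ^2 * (∫ a, (a ⬝ᵥ d)^2 * (a ⬝ᵥ a) ∂νx) := by
      have e1 : ∫ a, ((d ⬝ᵥ d) + (-(2*γ)) * (a ⬝ᵥ d)^2 + γ^2 * ((a ⬝ᵥ d)^2 * (a ⬝ᵥ a))) ∂νx
          = (∫ _a : Fin p → ℝ, (d ⬝ᵥ d) ∂νx) + (∫ a, (-(2*γ)) * (a ⬝ᵥ d)^2 ∂νx)
            + (∫ a, γ^2 * ((a ⬝ᵥ d)^2 * (a ⬝ᵥ a)) ∂νx) :=
        integral_add3 (integrable_const _) (hIntS2.const_mul _) (hIntS2T.const_mul _)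
      have e2 : ∫ a, (-(2*γ)) * (a ⬝ᵥ d)^2 ∂νx = (-(2*γ)) * ∫ a, (a ⬝ᵥ d)^2 ∂νx :=
        integral_const_mul _ _
      have e3 : ∫ a, γ^2 * ((a ⬝ᵥ d)^2 * (a ⬝ᵥ a)) ∂νx
          = γ^2 * ∫ a, (a ⬝ᵥ d)^2 * (a ⬝ᵥ a) ∂νx := integral_const_mul _ _
      rw [hfA, e1, e2, e3]
      simp [measure_univ]
    have hfCval : ∫ a, fC a ∂νx = γ^2 * (∫ a, a ⬝ᵥ a ∂νx) := by
      have e1 : ∫ a, γ^2 * (a ⬝ᵥ a) ∂νx = γ^2 * ∫ a, a ⬝ᵥ a ∂νx := integral_const_mul _ _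
      rw [hfC, e1]
    have hQ : ∫ a, (a ⬝ᵥ d)^2 ∂νx = d ⬝ᵥ (V *ᵥ d) := Q_eq νx M hbdd V hV d
    have hQμ : μ * (d ⬝ᵥ d) ≤ ∫ a, (a ⬝ᵥ d)^2 ∂νx := by rw [hQ]; exact hVμ d
    have hRMQ : ∫ a, (a ⬝ᵥ d)^2 * (a ⬝ᵥ a) ∂νx ≤ M * ∫ a, (a ⬝ᵥ d)^2 ∂νx := by
      rw [← (integral_const_mul M (fun a : Fin p → ℝ => (a ⬝ᵥ d)^2) : _ = _)]
      refine integral_mono_ae hIntS2T (hIntS2.const_mul M) ?_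
      filter_upwards [hbdd] with a ha
      nlinarith [sq_nonneg (a ⬝ᵥ d)]
    have hQ0 : 0 ≤ ∫ a, (a ⬝ᵥ d)^2 ∂νx := integral_nonneg fun a => sq_nonneg _
    rw [hfAval, hfCval]
    have hkey : γ * (2 - γ*M) * (μ * (d ⬝ᵥ d)) ≤ γ * (2 - γ*M) * (∫ a, (a ⬝ᵥ d)^2 ∂νx) :=
      mul_le_mul_of_nonneg_left hQμ (by nlinarith)
    have hkey2 : γ^2 * (∫ a, (a ⬝ᵥ d)^2 * (a ⬝ᵥ a) ∂νx) ≤ γ^2 * (M * ∫ a, (a ⬝ᵥ d)^2 ∂νx) :=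
      mul_le_mul_of_nonneg_left hRMQ (sq_nonneg γ)
    nlinarith [hkey, hkey2]
  -- outer integral
  have houter : ∫ d, ∫ y, g (d, y) ∂(νx.prod νε) ∂L
      ≤ (1 - γ * (2 - γ * M) * μ) * (∫ ω, δ ω ⬝ᵥ δ ω ∂P) + γ^2 * σ2 * (∫ a, a ⬝ᵥ a ∂νx) := by
    have hbint : Integrable (fun d : Fin p → ℝ =>
        (1 - γ * (2 - γ * M) * μ) * (d ⬝ᵥ d) + γ^2 * σ2 * (∫ a, a ⬝ᵥ a ∂νx)) L :=
      (hL1.const_mul _).add (integrable_const _)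
    have h := integral_mono_of_nonneg
      (Filter.Eventually.of_forall fun d => integral_nonneg fun y => hg0 (d, y))
      hbint (Filter.Eventually.of_forall hinner)
    have e1 : ∫ d, ((1 - γ * (2 - γ * M) * μ) * (d ⬝ᵥ d) + γ^2 * σ2 * (∫ a, a ⬝ᵥ a ∂νx)) ∂L
        = (∫ d, (1 - γ * (2 - γ * M) * μ) * (d ⬝ᵥ d) ∂L)
          + ∫ _d : Fin p → ℝ, γ^2 * σ2 * (∫ a, a ⬝ᵥ a ∂νx) ∂L :=
      integral_add (hL1.const_mul _) (integrable_const _)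
    have e2 : ∫ d, (1 - γ * (2 - γ * M) * μ) * (d ⬝ᵥ d) ∂L
        = (1 - γ * (2 - γ * M) * μ) * ∫ d, d ⬝ᵥ d ∂L := integral_const_mul _ _
    rw [e1, e2, integral_const] at h
    simp only [measure_univ, ENNReal.toReal_one, probReal_univ, smul_eq_mul, one_mul] at h
    have hLD : ∫ d, d ⬝ᵥ d ∂L = ∫ ω, δ ω ⬝ᵥ δ ω ∂P :=
      integral_map hδm.aemeasurable
        (meas_dot measurable_id measurable_id).aestronglyMeasurable
    rwa [hLD] at h
  constructor
  · have h2 : Integrable (g ∘ fun ω => (δ ω, w ω)) P :=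
      (integrable_map_measure hgmeas.aestronglyMeasurable hpair.aemeasurable).mp
        (by rwa [hlaw])
    exact h2.congr (Filter.Eventually.of_forall fun ω => (hpt ω).symm)
  · rw [hEq1, hFub]; exact houter


set_option maxHeartbeats 1000000 in
/-- Quadratic-loss SGD `θ_n = θ_{n-1} + γ(y_n - x_nᵀθ_{n-1})x_n`
with i.i.d. data `y_n = x_nᵀθ* + ε_n`, `x ~ νx`, `ε ~ νε` independent of `x`,
`E[ε] = 0`, `E[ε²] = σ²`, `‖x‖² ≤ M` almost surely and `V = E[xxᵀ] ⪰ μI` with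
`μ > 0`.  If `0 < γ < 2/M` and `γμ(2 - γM) ≤ 1`, then for every `n ≥ 0`,
`E[‖θ_n - θ*‖²] ≤ (1 - γ(2-γM)μ)ⁿ E[‖θ₀ - θ*‖²] + γσ²E[‖x‖²]/((2-γM)μ)`. -/
theorem sgd_quadratic_constant_rate_mse_bound
    (p : ℕ)
    (νx : Measure (Fin p → ℝ)) (νε : Measure ℝ)
    [IsProbabilityMeasure νx] [IsProbabilityMeasure νε]
    (θstar : Fin p → ℝ) (γ σ2 M μ : ℝ)
    (hμ : 0 < μ) (hM : 0 < M) (hγ : 0 < γ) (hγM : γ < 2 / M)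
    (hstep : γ * μ * (2 - γ * M) ≤ 1)
    (hmean : ∫ e, e ∂νε = 0) (hvar : ∫ e, e ^ 2 ∂νε = σ2)
    (hεint : Integrable (fun e : ℝ => e ^ 2) νε)
    (hbdd : ∀ᵐ a ∂νx, a ⬝ᵥ a ≤ M)
    (V : Matrix (Fin p) (Fin p) ℝ)
    (hV : ∀ i j, V i j = ∫ a, a i * a j ∂νx)
    (hVμ : ∀ v : Fin p → ℝ, μ * (v ⬝ᵥ v) ≤ v ⬝ᵥ (V *ᵥ v))
    -- the probability space carrying the i.i.d. data stream and the iterates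
    {Ω : Type*} [MeasurableSpace Ω] (P : Measure Ω) [IsProbabilityMeasure P]
    (x : ℕ → Ω → Fin p → ℝ) (ε : ℕ → Ω → ℝ)
    (hmeas : ∀ n, Measurable (fun ω => (x n ω, ε n ω)))
    (hiid : iIndepFun (fun n ω => (x n ω, ε n ω)) P)
    (hdist : ∀ n, Measure.map (fun ω => (x n ω, ε n ω)) P = νx.prod νε)
    (θ : ℕ → Ω → Fin p → ℝ)
    (hθmeas : ∀ n, Measurable (θ n))
    (hθ0L2 : Integrable (fun ω => ∑ i, (θ 0 ω i - θstar i) ^ 2) P)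
    (hθ0indep : IndepFun (θ 0) (fun ω n => (x n ω, ε n ω)) P)
    -- SGD recursion with y_n = x_nᵀθ* + ε_n
    (hrec : ∀ n : ℕ, 1 ≤ n → ∀ ω,
      θ n ω = θ (n - 1) ω
        + γ • ((((x n ω ⬝ᵥ θstar + ε n ω) - x n ω ⬝ᵥ θ (n - 1) ω)) • x n ω)) :
    ∀ n : ℕ,
      (∫ ω, ∑ i, (θ n ω i - θstar i) ^ 2 ∂P)
        ≤ (1 - γ * (2 - γ * M) * μ) ^ n
              * (∫ ω, ∑ i, (θ 0 ω i - θstar i) ^ 2 ∂P)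
          + γ * σ2 * (∫ a, a ⬝ᵥ a ∂νx) / ((2 - γ * M) * μ) := by
  classical
  have hγM2 : γ * M < 2 := (lt_div_iff₀ hM).mp hγM
  have h2γM : 0 < 2 - γ * M := by linarith
  have hσ2 : 0 ≤ σ2 := hvar ▸ integral_nonneg fun e => sq_nonneg e
  have hEx0 : 0 ≤ ∫ a, a ⬝ᵥ a ∂νx := integral_nonneg fun a => dot_self_nonneg a
  -- adaptedness of θ m to the first m data points and θ 0
  set 𝔪 : ℕ → MeasurableSpace Ω := fun m =>
    MeasurableSpace.comap (θ 0) inferInstance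
      ⊔ ⨆ k ∈ Finset.range (m+1),
          MeasurableSpace.comap (fun ω => (x k ω, ε k ω)) inferInstance with h𝔪
  have h𝔪mono : ∀ m, 𝔪 m ≤ 𝔪 (m+1) := by
    intro m
    refine sup_le_sup_left ?_ _
    refine iSup_le fun k => iSup_le fun hk => ?_
    exact le_biSup (fun k => MeasurableSpace.comap (fun ω => (x k ω, ε k ω)) inferInstance)
      (Finset.mem_range.mpr (lt_trans (Finset.mem_range.mp hk) (Nat.lt_succ_self _)))
  have hθ𝔪 : ∀ m, Measurable[𝔪 m] (θ m) := by
    intro m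
    induction m with
    | zero =>
      have h0 : Measurable[MeasurableSpace.comap (θ 0) inferInstance] (θ 0) :=
        measurable_iff_comap_le.mpr le_rfl
      exact h0.mono le_sup_left le_rfl
    | succ m ih =>
      have hXEm : Measurable[𝔪 (m+1)] (fun ω => (x (m+1) ω, ε (m+1) ω)) := by
        have h1 : Measurable[MeasurableSpace.comap (fun ω => (x (m+1) ω, ε (m+1) ω))
            inferInstance] (fun ω => (x (m+1) ω, ε (m+1) ω)) := measurable_iff_comap_le.mpr le_rfl
        refine h1.mono (le_trans ?_ le_sup_right) le_rfl
        exact le_biSup (fun k => MeasurableSpace.comap (fun ω => (x k ω, ε k ω)) inferInstance)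
          (Finset.mem_range.mpr (Nat.lt_succ_self (m+1)))
      have hxm : Measurable[𝔪 (m+1)] (x (m+1)) := measurable_fst.comp hXEm
      have hεm : Measurable[𝔪 (m+1)] (ε (m+1)) := measurable_snd.comp hXEm
      have hθm : Measurable[𝔪 (m+1)] (θ m) := ih.mono (h𝔪mono m) le_rfl
      have hform : θ (m+1) = fun ω => fun i => θ m ω i
          + γ * ((x (m+1) ω ⬝ᵥ θstar + ε (m+1) ω - x (m+1) ω ⬝ᵥ θ m ω) * x (m+1) ω i) := by
        funext ω i
        rw [hrec (m+1) (by omega) ω]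
        simp [Nat.add_sub_cancel]
      rw [hform]
      refine @measurable_pi_lambda Ω (Fin p) (fun _ => ℝ) (𝔪 (m+1)) _ _ fun i => ?_
      have hsc : Measurable[𝔪 (m+1)]
          fun ω => x (m+1) ω ⬝ᵥ θstar + ε (m+1) ω - x (m+1) ω ⬝ᵥ θ m ω :=
        ((meas_dot hxm measurable_const).add hεm).sub (meas_dot hxm hθm)
      exact ((measurable_pi_apply i).comp hθm).add
        ((hsc.mul ((measurable_pi_apply i).comp hxm)).const_mul γ)
  -- independence of (θ m - θstar) from the (m+1)-st data point
  have hIndep : ∀ m : ℕ,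
      IndepFun (fun ω => θ m ω - θstar) (fun ω => (x (m+1) ω, ε (m+1) ω)) P := by
    intro m
    have hpast := indep_past_now P (θ 0) (fun k ω => (x k ω, ε k ω)) (hθmeas 0) hmeas
      hθ0indep hiid (m+1)
    have hle : MeasurableSpace.comap (fun ω => θ m ω - θstar) inferInstance ≤ 𝔪 m :=
      measurable_iff_comap_le.mp ((hθ𝔪 m).sub measurable_const)
    rw [IndepFun_iff_Indep]
    exact indep_of_indep_of_le_left hpast (le_trans hle (le_of_eq (by rw [h𝔪])))
  have hLaw : ∀ m, P.map (fun ω => ((θ m ω - θstar), (x (m+1) ω, ε (m+1) ω)))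
      = (P.map (fun ω => θ m ω - θstar)).prod (νx.prod νε) := by
    intro m
    rw [← hdist (m+1)]
    exact (indepFun_iff_map_prod_eq_prod_map_map
      ((hθmeas m).sub measurable_const).aemeasurable (hmeas (m+1)).aemeasurable).mp (hIndep m)
  -- one-step inequality
  have hstep1 : ∀ n : ℕ, Integrable (fun ω => (θ n ω - θstar) ⬝ᵥ (θ n ω - θstar)) P →
      Integrable (fun ω => (θ (n+1) ω - θstar) ⬝ᵥ (θ (n+1) ω - θstar)) P ∧
      ∫ ω, (θ (n+1) ω - θstar) ⬝ᵥ (θ (n+1) ω - θstar) ∂P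
        ≤ (1 - γ * (2 - γ * M) * μ) * (∫ ω, (θ n ω - θstar) ⬝ᵥ (θ n ω - θstar) ∂P)
          + γ ^ 2 * σ2 * (∫ a, a ⬝ᵥ a ∂νx) := by
    intro n hi
    refine sgd_step νx νε γ σ2 M μ hμ hM hγ hγM2 hmean hvar hεint hbdd V hV hVμ P
      (fun ω => θ n ω - θstar) (fun ω => (x (n+1) ω, ε (n+1) ω))
      ((hθmeas n).sub measurable_const) (hmeas (n+1)) (hLaw n) hi
      (fun ω => θ (n+1) ω - θstar) ?_
    intro ω
    dsimp only
    rw [hrec (n+1) (by omega) ω]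
    simp only [Nat.add_sub_cancel]
    have hc : (x (n+1) ω ⬝ᵥ θstar + ε (n+1) ω - x (n+1) ω ⬝ᵥ θ n ω)
        = (ε (n+1) ω - x (n+1) ω ⬝ᵥ (θ n ω - θstar)) := by
      rw [dotProduct_sub]; ring
    rw [hc]
    abel
  -- integrability for all n
  have hint0 : Integrable (fun ω => (θ 0 ω - θstar) ⬝ᵥ (θ 0 ω - θstar)) P := by
    refine hθ0L2.congr (Filter.Eventually.of_forall fun ω => ?_)
    simp [dotProduct, Pi.sub_apply, pow_two]
  have hintall : ∀ n, Integrable (fun ω => (θ n ω - θstar) ⬝ᵥ (θ n ω - θstar)) P := by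
    intro n
    induction n with
    | zero => exact hint0
    | succ n ih => exact (hstep1 n ih).1
  -- the recursion sequence
  have hrecseq : ∀ n : ℕ, (∫ ω, (θ (n+1) ω - θstar) ⬝ᵥ (θ (n+1) ω - θstar) ∂P)
      ≤ (1 - γ * (2 - γ * M) * μ) * (∫ ω, (θ n ω - θstar) ⬝ᵥ (θ n ω - θstar) ∂P)
        + γ ^ 2 * σ2 * (∫ a, a ⬝ᵥ a ∂νx) := fun n => (hstep1 n (hintall n)).2
  have hρ0 : 0 ≤ 1 - γ * (2 - γ * M) * μ := by nlinarith
  have hρ1 : 1 - γ * (2 - γ * M) * μ < 1 := by nlinarith [mul_pos (mul_pos hγ h2γM) hμ]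
  have hc0 : 0 ≤ γ ^ 2 * σ2 * (∫ a, a ⬝ᵥ a ∂νx) := by positivity
  have hgeo := geom_rec_bound hρ0 hρ1 hc0
    (fun n => ∫ ω, (θ n ω - θstar) ⬝ᵥ (θ n ω - θstar) ∂P) hrecseq
  -- rewrite goal
  intro n
  have hgoal_eq : ∀ m, (∫ ω, ∑ i, (θ m ω i - θstar i) ^ 2 ∂P)
      = ∫ ω, (θ m ω - θstar) ⬝ᵥ (θ m ω - θstar) ∂P := by
    intro m
    refine integral_congr_ae (Filter.Eventually.of_forall fun ω => ?_)
    simp [dotProduct, Pi.sub_apply, pow_two]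
  rw [hgoal_eq n, hgoal_eq 0]
  refine le_trans (hgeo n) ?_
  have hconst : γ ^ 2 * σ2 * (∫ a, a ⬝ᵥ a ∂νx) / (1 - (1 - γ * (2 - γ * M) * μ))
      = γ * σ2 * (∫ a, a ⬝ᵥ a ∂νx) / ((2 - γ * M) * μ) := by
    rw [show (1 - (1 - γ * (2 - γ * M) * μ)) = γ * ((2 - γ * M) * μ) by ring,
      show γ ^ 2 * σ2 * (∫ a, a ⬝ᵥ a ∂νx) = γ * (γ * σ2 * (∫ a, a ⬝ᵥ a ∂νx)) by ring]
    exact mul_div_mul_left _ _ (ne_of_gt hγ)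
  rw [hconst]
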